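/- Let (M, m, τ) be a dynamical system on an MV-algebra and A a partition of unity. Define Hₙ(A,τ) = inf{ H(C) : C is a common refinement of A, τ(A), …, τ^{n-1}(A) }. Then the sequence is subadditive: H_{n+m}(A,τ) ≤ Hₙ(A,τ) + H_m(A,τ) for all n, m ≥ 1; consequently lim_{n→∞} (1/n)·Hₙ(A,τ) exists. -/

import Mathlib

open Real Filter

/-- A partition of the unit `u` in the MV-algebra `M = Γ(G,u) = [0,u] ⊆ G`. -/
def IsPartition {G : Type*} [Lattice G] [AddCommGroup G] (u : G) {n : ℕ}
    (a : Fin n → G) : Prop :=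
  (∀ i, a i ∈ Set.Icc 0 u) ∧ ∑ i, a i = u

/-- `c` refines the partition `p`: every element of `p` is the sum of a subfamily
of `c`, these subfamilies partitioning the index set of `c`. -/
def Refines {G : Type*} [Lattice G] [AddCommGroup G] {N k : ℕ}
    (c : Fin N → G) (p : Fin k → G) : Prop :=
  ∃ f : Fin N → Fin k, ∀ j, p j = ∑ i ∈ Finset.univ.filter (fun i => f i = j), c i

/-- Entropy of a partition with respect to a state `m`. -/
noncomputable def Ent {G : Type*} (m : G → ℝ) {n : ℕ} (a : Fin n → G) : ℝ :=
  ∑ i, negMulLog (m (a i))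

/-- `Hₙ(A,τ)`: the infimum of the entropies of common refinements of
`A, τ(A), …, τⁿ⁻¹(A)`. -/
noncomputable def Hn {G : Type*} [Lattice G] [AddCommGroup G]
    (u : G) (m : G → ℝ) (τ : G → G) {k : ℕ} (a : Fin k → G) (n : ℕ) : ℝ :=
  sInf { h : ℝ | ∃ (N : ℕ) (c : Fin N → G), IsPartition u c ∧
    (∀ l < n, Refines c (fun i => τ^[l] (a i))) ∧ h = Ent m c }


lemma gibbs_term (p q : ℝ) (hp : 0 ≤ p) (hq : 0 ≤ q) (h : p ≠ 0 → q ≠ 0) :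
    negMulLog p ≤ -(p * Real.log q) + q - p := by
  rcases eq_or_lt_of_le hp with h0 | hp0
  · simp [← h0, negMulLog, hq]
  · have hq0 : 0 < q := lt_of_le_of_ne hq (Ne.symm (h (ne_of_gt hp0)))
    have hlog : Real.log (q / p) ≤ q / p - 1 := Real.log_le_sub_one_of_pos (by positivity)
    have h2 : p * Real.log (q / p) ≤ q - p := by
      have := mul_le_mul_of_nonneg_left hlog hp
      calc p * Real.log (q/p) ≤ p * (q/p - 1) := this
        _ = q - p := by field_simp
    have h3 : Real.log (q / p) = Real.log q - Real.log p :=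
      Real.log_div (ne_of_gt hq0) (ne_of_gt hp0)
    rw [negMulLog]
    nlinarith [h2, h3]

lemma entropy_subadd {N N' : ℕ} (p : Fin N → Fin N' → ℝ)
    (hp : ∀ i j, 0 ≤ p i j) (htot : ∑ i, ∑ j, p i j = 1) :
    ∑ i, ∑ j, negMulLog (p i j) ≤
      (∑ i, negMulLog (∑ j, p i j)) + ∑ j, negMulLog (∑ i, p i j) := by
  set r : Fin N → ℝ := fun i => ∑ j, p i j with hr
  set s : Fin N' → ℝ := fun j => ∑ i, p i j with hs
  have hrn : ∀ i, 0 ≤ r i := fun i => Finset.sum_nonneg fun j _ => hp i j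
  have hsn : ∀ j, 0 ≤ s j := fun j => Finset.sum_nonneg fun i _ => hp i j
  have hpr : ∀ i j, p i j ≤ r i := fun i j =>
    Finset.single_le_sum (fun j _ => hp i j) (Finset.mem_univ j)
  have hps : ∀ i j, p i j ≤ s j := fun i j =>
    Finset.single_le_sum (fun i _ => hp i j) (Finset.mem_univ i)
  have hrs : ∑ i, r i = 1 := htot
  have hss : ∑ j, s j = 1 := by rw [hs]; rw [← htot]; exact Finset.sum_comm
  have step1 : ∑ i, ∑ j, negMulLog (p i j) ≤
      ∑ i, ∑ j, (-(p i j * Real.log (r i * s j)) + r i * s j - p i j) := by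
    refine Finset.sum_le_sum fun i _ => Finset.sum_le_sum fun j _ => ?_
    refine gibbs_term _ _ (hp i j) (mul_nonneg (hrn i) (hsn j)) fun hne => ?_
    have hppos : 0 < p i j := lt_of_le_of_ne (hp i j) (Ne.symm hne)
    exact ne_of_gt (mul_pos (lt_of_lt_of_le hppos (hpr i j)) (lt_of_lt_of_le hppos (hps i j)))
  have step2 : ∑ i, ∑ j, (-(p i j * Real.log (r i * s j)) + r i * s j - p i j)
      = ∑ i, ∑ j, (-(p i j * Real.log (r i)) + -(p i j * Real.log (s j))) := by
    have hsum1 : ∑ i, ∑ j, (r i * s j) = 1 := by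
      simp only [← Finset.mul_sum, hss, mul_one, hrs]
    have hsplit : ∀ i j, -(p i j * Real.log (r i * s j)) =
        -(p i j * Real.log (r i)) + -(p i j * Real.log (s j)) := by
      intro i j
      rcases eq_or_ne (p i j) 0 with h0 | h0
      · simp [h0]
      · have hppos : 0 < p i j := lt_of_le_of_ne (hp i j) (Ne.symm h0)
        have hr0 : r i ≠ 0 := ne_of_gt (lt_of_lt_of_le hppos (hpr i j))
        have hs0 : s j ≠ 0 := ne_of_gt (lt_of_lt_of_le hppos (hps i j))
        rw [Real.log_mul hr0 hs0]; ring
    calc ∑ i, ∑ j, (-(p i j * Real.log (r i * s j)) + r i * s j - p i j)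
        = (∑ i, ∑ j, -(p i j * Real.log (r i * s j))) + ((∑ i, ∑ j, r i * s j) - ∑ i, ∑ j, p i j) := by
          simp [Finset.sum_add_distrib, Finset.sum_sub_distrib]; ring
      _ = ∑ i, ∑ j, -(p i j * Real.log (r i * s j)) := by rw [hsum1, htot]; ring
      _ = _ := by simp only [hsplit]
  have key : ∀ (n n' : ℕ) (q : Fin n → Fin n' → ℝ), (∀ i j, 0 ≤ q i j) →
      ∀ i, ∑ j, -(q i j * Real.log (∑ j', q i j')) = negMulLog (∑ j, q i j) := by
    intro n n' q hq i
    rcases eq_or_ne (∑ j', q i j') 0 with h0 | h0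
    · have hz : ∀ j ∈ Finset.univ, q i j = 0 :=
        fun j hj => (Finset.sum_eq_zero_iff_of_nonneg (fun j _ => hq i j)).mp h0 j hj
      have : ∑ j, -(q i j * Real.log (∑ j', q i j')) = 0 :=
        Finset.sum_eq_zero fun j hj => by rw [hz j hj]; ring
      rw [this, h0]; simp [negMulLog]
    · rw [Finset.sum_neg_distrib, ← Finset.sum_mul, negMulLog, neg_mul]
  have step3 : ∑ i, ∑ j, -(p i j * Real.log (r i)) = ∑ i, negMulLog (r i) :=
    Finset.sum_congr rfl fun i _ => key N N' p hp i
  have step4 : ∑ i, ∑ j, -(p i j * Real.log (s j)) = ∑ j, negMulLog (s j) := by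
    rw [Finset.sum_comm]
    exact Finset.sum_congr rfl fun j _ => key N' N (fun j i => p i j) (fun j i => hp i j) j
  have hsplit2 : ∑ i, ∑ j, (-(p i j * Real.log (r i)) + -(p i j * Real.log (s j)))
      = (∑ i, ∑ j, -(p i j * Real.log (r i))) + ∑ i, ∑ j, -(p i j * Real.log (s j)) := by
    simp [Finset.sum_add_distrib]
  linarith [step1, step2.symm ▸ step1]
section AuxGrp
variable {G : Type*} [Lattice G] [AddCommGroup G] [CovariantClass G G (· + ·) (· ≤ ·)]

private def myOAG (G : Type*) [Lattice G] [AddCommGroup G]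
    [CovariantClass G G (· + ·) (· ≤ ·)] : IsOrderedAddMonoid G :=
  { add_le_add_left := fun a b h c => by
      rw [add_comm a, add_comm b]; exact CovariantClass.elim c h }

private lemma supermod {s s' t t' : G} (hs : s ≤ s') (ht : t ≤ t') :
    s ⊓ t' + s' ⊓ t ≤ s ⊓ t + s' ⊓ t' := by
  letI := myOAG G
  have h1 : s ⊓ t + s' ⊓ t' = ((s + s') ⊓ (s + t')) ⊓ ((t + s') ⊓ (t + t')) := by
    rw [inf_add, add_inf, add_inf, inf_inf_inf_comm]
  rw [h1]
  refine le_inf (le_inf ?_ ?_) (le_inf ?_ ?_)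
  · exact add_le_add inf_le_left inf_le_left
  · exact add_le_add inf_le_left (inf_le_right.trans ht)
  · calc s ⊓ t' + s' ⊓ t ≤ s' + t := add_le_add (inf_le_left.trans hs) inf_le_right
      _ = t + s' := add_comm _ _
  · calc s ⊓ t' + s' ⊓ t ≤ t' + t := add_le_add inf_le_right inf_le_right
      _ = t + t' := add_comm _ _

/-- A map additive on `[0,u]` commutes with sums of families inside `[0,u]`. -/
private lemma mapSum {H : Type*} [AddCommMonoid H] (u : G) (σ : G → H) (hσ0 : σ 0 = 0)
    (hσ : ∀ b c : G, b ∈ Set.Icc 0 u → c ∈ Set.Icc 0 u → b + c ∈ Set.Icc 0 u →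
      σ (b + c) = σ b + σ c)
    {ι : Type*} (s : Finset ι) (g : ι → G) (hmem : ∀ i ∈ s, g i ∈ Set.Icc 0 u)
    (hle : ∑ i ∈ s, g i ≤ u) : σ (∑ i ∈ s, g i) = ∑ i ∈ s, σ (g i) := by
  letI := myOAG G
  classical
  induction s using Finset.induction_on with
  | empty => simpa using hσ0
  | insert _ _ hnot ih =>
    rename_i i s'
    rw [Finset.sum_insert hnot, Finset.sum_insert hnot]
    have hmem' : ∀ j ∈ s', g j ∈ Set.Icc 0 u := fun j hj => hmem j (Finset.mem_insert_of_mem hj)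
    have hs'0 : (0 : G) ≤ ∑ j ∈ s', g j := Finset.sum_nonneg fun j hj => (hmem' j hj).1
    have htot : g i + ∑ j ∈ s', g j ≤ u := by
      rw [← Finset.sum_insert hnot]; exact hle
    have hs'le : ∑ j ∈ s', g j ≤ u :=
      le_trans (le_add_of_nonneg_left (hmem i (Finset.mem_insert_self i s')).1) htot
    rw [hσ (g i) (∑ j ∈ s', g j) (hmem i (Finset.mem_insert_self i s'))
      ⟨hs'0, hs'le⟩ ⟨add_nonneg (hmem i (Finset.mem_insert_self i s')).1 hs'0, htot⟩,
      ih hmem' hs'le]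

set_option linter.unusedSectionVars false in
private lemma refines_trans {N N' k : ℕ} {e : Fin N → G} {c : Fin N' → G} {p : Fin k → G}
    (h1 : Refines e c) (h2 : Refines c p) : Refines e p := by
  obtain ⟨f, hf⟩ := h1
  obtain ⟨g, hg⟩ := h2
  refine ⟨g ∘ f, fun j => ?_⟩
  rw [hg j]
  calc ∑ l ∈ Finset.univ.filter (fun l => g l = j), c l
      = ∑ l ∈ Finset.univ.filter (fun l => g l = j),
          ∑ i ∈ Finset.univ.filter (fun i => f i = l), e i :=
        Finset.sum_congr rfl fun l _ => hf l
    _ = ∑ l, if g l = j then ∑ i ∈ Finset.univ.filter (fun i => f i = l), e i else 0 := by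
        rw [Finset.sum_filter]
    _ = ∑ l, ∑ i ∈ Finset.univ.filter (fun i => f i = l), (if g (f i) = j then e i else 0) := by
        refine Finset.sum_congr rfl fun l _ => ?_
        split_ifs with h
        · exact Finset.sum_congr rfl fun i hi => by
            rw [(Finset.mem_filter.mp hi).2, if_pos h]
        · refine (Finset.sum_eq_zero fun i hi => ?_).symm
          rw [(Finset.mem_filter.mp hi).2, if_neg h]
    _ = ∑ i, if g (f i) = j then e i else 0 :=
        Finset.sum_fiberwise Finset.univ f _
    _ = ∑ i ∈ Finset.univ.filter (fun i => (g ∘ f) i = j), e i := by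
        rw [Finset.sum_filter]; rfl

end AuxGrp

set_option linter.unusedSectionVars false in
private lemma common_refinement {G : Type*} [Lattice G] [AddCommGroup G]
    [CovariantClass G G (· + ·) (· ≤ ·)] (u : G) (m : G → ℝ)
    (hm01 : ∀ a ∈ Set.Icc 0 u, m a ∈ Set.Icc (0 : ℝ) 1)
    (hm_add : ∀ b c : G, b ∈ Set.Icc 0 u → c ∈ Set.Icc 0 u → b + c ∈ Set.Icc 0 u →
      m (b + c) = m b + m c)
    (hmu : m u = 1) (h0u : 0 ≤ u)
    {N N' : ℕ} {c : Fin N → G} {d : Fin N' → G}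
    (hc : IsPartition u c) (hd : IsPartition u d) :
    ∃ e : Fin (N * N') → G, IsPartition u e ∧ Refines e c ∧ Refines e d ∧
      Ent m e ≤ Ent m c + Ent m d := by
  letI := myOAG G
  classical
  have hm0 : m 0 = 0 := by
    have := hm_add 0 0 ⟨le_refl 0, h0u⟩ ⟨le_refl 0, h0u⟩ (by rw [add_zero]; exact ⟨le_refl 0, h0u⟩)
    simp only [add_zero] at this; linarith
  set c' : ℕ → G := fun i => if h : i < N then c ⟨i, h⟩ else 0 with hc'
  set d' : ℕ → G := fun j => if h : j < N' then d ⟨j, h⟩ else 0 with hd'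
  set S : ℕ → G := fun j => ∑ i ∈ Finset.range j, c' i with hS
  set T : ℕ → G := fun j => ∑ i ∈ Finset.range j, d' i with hT
  have hc'0 : ∀ i, 0 ≤ c' i := by
    intro i; simp only [hc']; split
    · exact (hc.1 _).1
    · exact le_refl 0
  have hd'0 : ∀ j, 0 ≤ d' j := by
    intro j; simp only [hd']; split
    · exact (hd.1 _).1
    · exact le_refl 0
  have hc'eq : ∀ i : Fin N, c' i.val = c i := by
    intro i; simp only [hc', i.isLt, dif_pos, Fin.eta]
  have hd'eq : ∀ j : Fin N', d' j.val = d j := by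
    intro j; simp only [hd', j.isLt, dif_pos, Fin.eta]
  have hSN : S N = u := by
    show ∑ i ∈ Finset.range N, c' i = u
    rw [← Fin.sum_univ_eq_sum_range c' N, Finset.sum_congr rfl fun i _ => hc'eq i, hc.2]
  have hTN : T N' = u := by
    show ∑ i ∈ Finset.range N', d' i = u
    rw [← Fin.sum_univ_eq_sum_range d' N', Finset.sum_congr rfl fun j _ => hd'eq j, hd.2]
  have hSsucc : ∀ j, S (j + 1) = S j + c' j := fun j => Finset.sum_range_succ c' j
  have hTsucc : ∀ j, T (j + 1) = T j + d' j := fun j => Finset.sum_range_succ d' j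
  have hSmono : ∀ j, S j ≤ S (j + 1) := fun j => by
    rw [hSsucc]; exact le_add_of_nonneg_right (hc'0 j)
  have hTmono : ∀ j, T j ≤ T (j + 1) := fun j => by
    rw [hTsucc]; exact le_add_of_nonneg_right (hd'0 j)
  have hS0' : ∀ j, 0 ≤ S j := fun j => Finset.sum_nonneg fun i _ => hc'0 i
  have hT0' : ∀ j, 0 ≤ T j := fun j => Finset.sum_nonneg fun i _ => hd'0 i
  have hSle : ∀ j, j ≤ N → S j ≤ u := by
    intro j hj
    rw [← hSN]
    exact Finset.sum_le_sum_of_subset_of_nonneg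
      (Finset.range_subset_range.2 hj) (fun i _ _ => hc'0 i)
  have hTle : ∀ j, j ≤ N' → T j ≤ u := by
    intro j hj
    rw [← hTN]
    exact Finset.sum_le_sum_of_subset_of_nonneg
      (Finset.range_subset_range.2 hj) (fun i _ _ => hd'0 i)
  have hT0 : T 0 = 0 := by simp [hT]
  have hS0 : S 0 = 0 := by simp [hS]
  set E : Fin N × Fin N' → G := fun q =>
    S (q.1 + 1) ⊓ T (q.2 + 1) - S (q.1 + 1) ⊓ T q.2 - S q.1 ⊓ T (q.2 + 1) + S q.1 ⊓ T q.2
    with hE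
  have hE0 : ∀ q, 0 ≤ E q := by
    intro q
    have h := supermod (hSmono q.1) (hTmono q.2)
    have heq : E q = (S q.1 ⊓ T q.2 + S (q.1 + 1) ⊓ T (q.2 + 1))
        - (S q.1 ⊓ T (q.2 + 1) + S (q.1 + 1) ⊓ T q.2) := by
      simp only [hE]; abel
    rw [heq]
    exact sub_nonneg.2 h
  have hrow : ∀ i : Fin N, ∑ j, E (i, j) = c i := by
    intro i
    set g : ℕ → G := fun j => S (i + 1) ⊓ T j - S i ⊓ T j with hg
    have h1 : ∀ j : Fin N', E (i, j) = g (j.val + 1) - g j.val := by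
      intro j; simp only [hE, hg]; abel
    have hgN : g N' = S (i.val + 1) - S i.val := by
      simp only [hg]
      rw [hTN, inf_eq_left.2 (hSle _ i.isLt), inf_eq_left.2 (hSle _ (le_of_lt i.isLt))]
    have hg0 : g 0 = 0 := by
      simp only [hg]
      rw [hT0, inf_eq_right.2 (hS0' _), inf_eq_right.2 (hS0' _), sub_zero]
    calc ∑ j : Fin N', E (i, j) = ∑ j : Fin N', (g (j.val + 1) - g j.val) :=
          Finset.sum_congr rfl fun j _ => h1 j
      _ = ∑ j ∈ Finset.range N', (g (j + 1) - g j) := Fin.sum_univ_eq_sum_range (fun j => g (j + 1) - g j) N'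
      _ = g N' - g 0 := Finset.sum_range_sub g N'
      _ = c i := by rw [hgN, hg0, sub_zero, hSsucc, add_sub_cancel_left, hc'eq]
  have hcol : ∀ j : Fin N', ∑ i, E (i, j) = d j := by
    intro j
    set g : ℕ → G := fun i => S i ⊓ T (j + 1) - S i ⊓ T j with hg
    have h1 : ∀ i : Fin N, E (i, j) = g (i.val + 1) - g i.val := by
      intro i; simp only [hE, hg]; abel
    have hgN : g N = T (j.val + 1) - T j.val := by
      simp only [hg]
      rw [hSN, inf_eq_right.2 (hTle _ j.isLt), inf_eq_right.2 (hTle _ (le_of_lt j.isLt))]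
    have hg0 : g 0 = 0 := by
      simp only [hg]
      rw [hS0, inf_eq_left.2 (hT0' _), inf_eq_left.2 (hT0' _), sub_zero]
    calc ∑ i : Fin N, E (i, j) = ∑ i : Fin N, (g (i.val + 1) - g i.val) :=
          Finset.sum_congr rfl fun i _ => h1 i
      _ = ∑ i ∈ Finset.range N, (g (i + 1) - g i) := Fin.sum_univ_eq_sum_range (fun i => g (i + 1) - g i) N
      _ = g N - g 0 := Finset.sum_range_sub g N
      _ = d j := by rw [hgN, hg0, sub_zero, hTsucc, add_sub_cancel_left, hd'eq]
  have htotE : ∑ q : Fin N × Fin N', E q = u := by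
    rw [Fintype.sum_prod_type, Finset.sum_congr rfl fun i _ => hrow i, hc.2]
  have hEmem : ∀ q, E q ∈ Set.Icc 0 u := by
    intro q
    refine ⟨hE0 q, ?_⟩
    calc E q = E (q.1, q.2) := rfl
      _ ≤ ∑ j, E (q.1, j) :=
        Finset.single_le_sum (fun j _ => hE0 (q.1, j)) (Finset.mem_univ q.2)
      _ = c q.1 := hrow q.1
      _ ≤ u := (hc.1 q.1).2
  set e : Fin (N * N') → G := fun x => E (finProdFinEquiv.symm x) with he
  have hepart : IsPartition u e := by
    refine ⟨fun x => hEmem _, ?_⟩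
    show ∑ x, E (finProdFinEquiv.symm x) = u
    rw [Equiv.sum_comp finProdFinEquiv.symm E, htotE]
  have hfilter : ∀ {k : ℕ} (f : Fin N × Fin N' → Fin k) (j : Fin k),
      ∑ x ∈ Finset.univ.filter (fun x => f (finProdFinEquiv.symm x) = j), e x
        = ∑ q ∈ Finset.univ.filter (fun q => f q = j), E q := by
    intro k f j
    refine Finset.sum_equiv finProdFinEquiv.symm ?_ ?_
    · intro x; simp
    · intro x _; rfl
  have href_c : Refines e c := by
    refine ⟨fun x => (finProdFinEquiv.symm x).1, fun i0 => ?_⟩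
    rw [hfilter (fun q => q.1) i0]
    rw [Finset.sum_filter, Fintype.sum_prod_type]
    have : ∀ i : Fin N, (∑ j, if (i, j).1 = i0 then E (i, j) else 0)
        = if i = i0 then ∑ j, E (i, j) else 0 := by
      intro i
      split_ifs with h
      · rfl
      · exact Finset.sum_const_zero
    rw [Finset.sum_congr rfl fun i _ => this i, Finset.sum_ite_eq' Finset.univ i0,
      if_pos (Finset.mem_univ i0), hrow i0]
  have href_d : Refines e d := by
    refine ⟨fun x => (finProdFinEquiv.symm x).2, fun j0 => ?_⟩
    rw [hfilter (fun q => q.2) j0]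
    rw [Finset.sum_filter, Fintype.sum_prod_type]
    have : ∀ i : Fin N, (∑ j, if (i, j).2 = j0 then E (i, j) else 0) = E (i, j0) := by
      intro i
      rw [Finset.sum_ite_eq' Finset.univ j0 (fun j => E (i, j)), if_pos (Finset.mem_univ j0)]
    rw [Finset.sum_congr rfl fun i _ => this i, hcol j0]
  set p : Fin N → Fin N' → ℝ := fun i j => m (E (i, j)) with hp
  have hpn : ∀ i j, 0 ≤ p i j := fun i j => (hm01 _ (hEmem (i, j))).1
  have htotp : ∑ i, ∑ j, p i j = 1 := by
    have h := mapSum u m hm0 hm_add Finset.univ E (fun q _ => hEmem q) (le_of_eq htotE)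
    rw [htotE, hmu] at h
    show ∑ i, ∑ j, m (E (i, j)) = 1
    exact (Fintype.sum_prod_type (f := fun q : Fin N × Fin N' => m (E q))).symm.trans h.symm
  have hmarg_r : ∀ i, m (c i) = ∑ j, p i j := by
    intro i
    rw [← hrow i]
    exact mapSum u m hm0 hm_add Finset.univ (fun j => E (i, j))
      (fun j _ => hEmem (i, j)) (by rw [hrow i]; exact (hc.1 i).2)
  have hmarg_s : ∀ j, m (d j) = ∑ i, p i j := by
    intro j
    rw [← hcol j]
    exact mapSum u m hm0 hm_add Finset.univ (fun i => E (i, j))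
      (fun i _ => hEmem (i, j)) (by rw [hcol j]; exact (hd.1 j).2)
  refine ⟨e, hepart, href_c, href_d, ?_⟩
  have hente : Ent m e = ∑ i, ∑ j, Real.negMulLog (p i j) := by
    show ∑ x, Real.negMulLog (m (E (finProdFinEquiv.symm x))) = _
    rw [Equiv.sum_comp finProdFinEquiv.symm (fun q => Real.negMulLog (m (E q))), Fintype.sum_prod_type]
  have hentc : Ent m c = ∑ i, Real.negMulLog (∑ j, p i j) := by
    rw [Ent]; exact Finset.sum_congr rfl fun i _ => by rw [hmarg_r i]
  have hentd : Ent m d = ∑ j, Real.negMulLog (∑ i, p i j) := by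
    rw [Ent]; exact Finset.sum_congr rfl fun j _ => by rw [hmarg_s j]
  rw [hente, hentc, hentd]
  exact entropy_subadd p hpn htotp

/-- The sequence `Hₙ(A,τ)` is subadditive, hence `(1/n)·Hₙ(A,τ)` converges. -/
theorem Hn_subadditive_and_limit_exists {G : Type*} [Lattice G] [AddCommGroup G]
    [CovariantClass G G (· + ·) (· ≤ ·)]
    (u : G) (m : G → ℝ) (τ : G → G)
    (hm01 : ∀ a ∈ Set.Icc 0 u, m a ∈ Set.Icc (0 : ℝ) 1)
    (hm_add : ∀ b c : G, b ∈ Set.Icc 0 u → c ∈ Set.Icc 0 u → b + c ∈ Set.Icc 0 u →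
      m (b + c) = m b + m c)
    (hτ_add : ∀ b c : G, b ∈ Set.Icc 0 u → c ∈ Set.Icc 0 u → b + c ∈ Set.Icc 0 u →
      τ (b + c) = τ b + τ c)
    (hτ_mem : ∀ a ∈ Set.Icc 0 u, τ a ∈ Set.Icc 0 u)
    (hτu : τ u = u) (hmu : m u = 1)
    (hmτ : ∀ a ∈ Set.Icc 0 u, m (τ a) = m a)
    {k : ℕ} (a : Fin k → G) (hA : IsPartition u a) :
    (∀ n m' : ℕ, 1 ≤ n → 1 ≤ m' →
        Hn u m τ a (n + m') ≤ Hn u m τ a n + Hn u m τ a m') ∧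
      ∃ L : ℝ, Tendsto (fun n : ℕ => Hn u m τ a n / n) atTop (nhds L) := by
  classical
  letI := myOAG G
  have h0u : (0 : G) ≤ u := by
    rw [← hA.2]; exact Finset.sum_nonneg fun i _ => (hA.1 i).1
  have hτ0 : τ 0 = 0 := by
    have h := hτ_add 0 0 ⟨le_refl 0, h0u⟩ ⟨le_refl 0, h0u⟩
      (by rw [add_zero]; exact ⟨le_refl 0, h0u⟩)
    rw [add_zero] at h
    exact (left_eq_add.mp h)
  have hiter_mem : ∀ (n : ℕ) (x : G), x ∈ Set.Icc 0 u → τ^[n] x ∈ Set.Icc 0 u := by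
    intro n
    induction n with
    | zero => simp
    | succ n ih =>
      intro x hx
      rw [Function.iterate_succ_apply]
      exact ih _ (hτ_mem x hx)
  have hiter_m : ∀ (n : ℕ) (x : G), x ∈ Set.Icc 0 u → m (τ^[n] x) = m x := by
    intro n
    induction n with
    | zero => intro x _; rfl
    | succ n ih =>
      intro x hx
      rw [Function.iterate_succ_apply, ih _ (hτ_mem x hx), hmτ x hx]
  have hiter_u : ∀ n : ℕ, τ^[n] u = u := by
    intro n
    induction n with
    | zero => rfl
    | succ n ih => rw [Function.iterate_succ_apply, hτu, ih]
  have hiter0 : ∀ n : ℕ, τ^[n] (0 : G) = 0 := by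
    intro n
    induction n with
    | zero => rfl
    | succ n ih => rw [Function.iterate_succ_apply, hτ0, ih]
  have hiter_add : ∀ (n : ℕ) (b c : G), b ∈ Set.Icc 0 u → c ∈ Set.Icc 0 u →
      b + c ∈ Set.Icc 0 u → τ^[n] (b + c) = τ^[n] b + τ^[n] c := by
    intro n
    induction n with
    | zero => intro b c _ _ _; rfl
    | succ n ih =>
      intro b c hb hc hbc
      rw [Function.iterate_succ_apply, Function.iterate_succ_apply,
        Function.iterate_succ_apply, hτ_add b c hb hc hbc]
      exact ih _ _ (hτ_mem b hb) (hτ_mem c hc) (hτ_add b c hb hc hbc ▸ hτ_mem _ hbc)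
  have hτA : ∀ l : ℕ, IsPartition u (fun i => τ^[l] (a i)) := by
    intro l
    refine ⟨fun i => hiter_mem l _ (hA.1 i), ?_⟩
    rw [← mapSum u (τ^[l]) (hiter0 l) (hiter_add l) Finset.univ a
      (fun i _ => hA.1 i) (le_of_eq hA.2), hA.2, hiter_u l]
  set Sset : ℕ → Set ℝ := fun n => { h : ℝ | ∃ (N : ℕ) (c : Fin N → G), IsPartition u c ∧
    (∀ l < n, Refines c (fun i => τ^[l] (a i))) ∧ h = Ent m c } with hSset
  have hHn : ∀ n, Hn u m τ a n = sInf (Sset n) := fun n => rfl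
  have hEnt_nonneg : ∀ {N : ℕ} (c : Fin N → G), IsPartition u c → 0 ≤ Ent m c := by
    intro N c hc
    exact Finset.sum_nonneg fun i _ =>
      Real.negMulLog_nonneg (hm01 _ (hc.1 i)).1 (hm01 _ (hc.1 i)).2
  have hbdd : ∀ n, BddBelow (Sset n) := by
    intro n
    refine ⟨0, ?_⟩
    rintro h ⟨N, c, hc, _, rfl⟩
    exact hEnt_nonneg c hc
  have hne : ∀ n, (Sset n).Nonempty := by
    intro n
    suffices hs : ∃ (N : ℕ) (c : Fin N → G), IsPartition u c ∧
        ∀ l < n, Refines c (fun i => τ^[l] (a i)) by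
      obtain ⟨N, c, hc, hr⟩ := hs
      exact ⟨Ent m c, N, c, hc, hr, rfl⟩
    induction n with
    | zero => exact ⟨k, a, hA, fun l hl => absurd hl (Nat.not_lt_zero l)⟩
    | succ n ih =>
      obtain ⟨N, c, hc, hr⟩ := ih
      obtain ⟨e, he, hec, hed, -⟩ :=
        common_refinement u m hm01 hm_add hmu h0u hc (hτA n)
      refine ⟨N * k, e, he, fun l hl => ?_⟩
      rcases Nat.lt_succ_iff_lt_or_eq.mp hl with h | h
      · exact refines_trans hec (hr l h)
      · subst h; exact hed
  have main : ∀ n m' : ℕ, Hn u m τ a (n + m') ≤ Hn u m τ a n + Hn u m τ a m' := by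
    intro n mm
    have key : ∀ x ∈ Sset n, ∀ y ∈ Sset mm, Hn u m τ a (n + mm) ≤ x + y := by
      rintro x ⟨N, c, hc, hcr, rfl⟩ y ⟨N', d, hd, hdr, rfl⟩
      set d2 : Fin N' → G := fun i => τ^[n] (d i) with hd2
      have hd2p : IsPartition u d2 := by
        refine ⟨fun i => hiter_mem n _ (hd.1 i), ?_⟩
        show ∑ i, τ^[n] (d i) = u
        rw [← mapSum u (τ^[n]) (hiter0 n) (hiter_add n) Finset.univ d
          (fun i _ => hd.1 i) (le_of_eq hd.2), hd.2, hiter_u n]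
      have hEntd2 : Ent m d2 = Ent m d :=
        Finset.sum_congr rfl fun i _ =>
          congrArg Real.negMulLog (hiter_m n _ (hd.1 i))
      obtain ⟨e, he, hec, hed2, hent⟩ :=
        common_refinement u m hm01 hm_add hmu h0u hc hd2p
      have hrefs : ∀ l < n + mm, Refines e (fun i => τ^[l] (a i)) := by
        intro l hl
        by_cases hln : l < n
        · exact refines_trans hec (hcr l hln)
        · push_neg at hln
          have hlm : l - n < mm := by omega
          have hd2r : Refines d2 (fun i => τ^[l] (a i)) := by
            obtain ⟨f, hf⟩ := hdr (l - n) hlm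
            refine ⟨f, fun j => ?_⟩
            have h1 : τ^[l] (a j) = τ^[n] (τ^[l - n] (a j)) := by
              rw [← Function.iterate_add_apply]
              congr 1
              omega
            have hle : ∑ i ∈ Finset.univ.filter (fun i => f i = j), d i ≤ u := by
              calc ∑ i ∈ Finset.univ.filter (fun i => f i = j), d i
                  ≤ ∑ i, d i := Finset.sum_le_sum_of_subset_of_nonneg
                    (Finset.filter_subset _ _) (fun i _ _ => (hd.1 i).1)
                _ = u := hd.2
            have hf' : τ^[l - n] (a j) = ∑ i ∈ Finset.univ.filter (fun i => f i = j), d i :=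
              hf j
            show τ^[l] (a j) = ∑ i ∈ Finset.univ.filter (fun i => f i = j), d2 i
            rw [h1, hf']
            exact mapSum u (τ^[n]) (hiter0 n) (hiter_add n) _ d
              (fun i _ => hd.1 i) hle
          exact refines_trans hed2 hd2r
      calc Hn u m τ a (n + mm) ≤ Ent m e :=
            csInf_le (hbdd _) ⟨N * N', e, he, hrefs, rfl⟩
        _ ≤ Ent m c + Ent m d2 := hent
        _ = Ent m c + Ent m d := by rw [hEntd2]
    have h1 : ∀ y ∈ Sset mm, Hn u m τ a (n + mm) - y ≤ Hn u m τ a n := by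
      intro y hy
      rw [hHn n]
      refine le_csInf (hne n) fun x hx => ?_
      linarith [key x hx y hy]
    have h2 : Hn u m τ a (n + mm) - Hn u m τ a n ≤ Hn u m τ a mm := by
      rw [hHn mm]
      refine le_csInf (hne mm) fun y hy => ?_
      linarith [h1 y hy]
    linarith
  refine ⟨fun n m' _ _ => main n m', ?_⟩
  have hsub : Subadditive (fun n => Hn u m τ a n) := fun p q => main p q
  have hb : BddBelow (Set.range fun n : ℕ => Hn u m τ a n / n) := by
    refine ⟨0, ?_⟩
    rintro x ⟨n, rfl⟩
    have h0 : 0 ≤ Hn u m τ a n := by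
      rw [hHn n]
      refine le_csInf (hne n) ?_
      rintro h ⟨N, c, hc, -, rfl⟩
      exact hEnt_nonneg c hc
    exact div_nonneg h0 (Nat.cast_nonneg n)
  exact ⟨hsub.lim, hsub.tendsto_lim hb⟩
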